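/- The symmetrization argument: let μ be a partition with rows indexed by (a,i) (length a, multiplicity index i), and assign distinct variables x_{a,i,j} to cells. Let f be the product over pairs of rows (a,i) > (a',i') of (x_{a,i,j} - x_{a',i',j})(x_{a,i,j+1} - x_{a',i',j}) over columns j of the shorter row (indices cyclic within rows). Then under the evaluation x_{a,i,j} ↦ y_{a,i}, the only permutations σ of the variables for which f(σ(x)) evaluates to a nonzero value are those permuting variables within rows or exchanging entire rows of equal length. -/

import Mathlib

open MvPolynomial

/-- Ordering of rows of a Young diagram: `(a,i) > (a',i')` iff the row is longer, or
of equal length and earlier in the given enumeration. -/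
def rowGT {R : ℕ} (len : Fin R → ℕ) (s t : Fin R) : Prop :=
  len t < len s ∨ (len s = len t ∧ s < t)

instance {R : ℕ} (len : Fin R → ℕ) (s t : Fin R) : Decidable (rowGT len s t) := by
  unfold rowGT; infer_instance

open Finset

lemma rowGT_irrefl {R : ℕ} (len : Fin R → ℕ) (s : Fin R) : ¬ rowGT len s s := by
  unfold rowGT; simp

lemma rowGT_total {R : ℕ} (len : Fin R → ℕ) {s t : Fin R} (h : s ≠ t) :
    rowGT len s t ∨ rowGT len t s := by
  unfold rowGT
  have hv : s.val ≠ t.val := fun hc => h (Fin.ext hc)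
  rcases Nat.lt_trichotomy (len s) (len t) with h1 | h1 | h1
  · right; left; exact h1
  · rcases Nat.lt_or_ge s.val t.val with h2 | h2
    · left; right; exact ⟨h1, h2⟩
    · right; right; exact ⟨h1.symm, by omega⟩
  · left; left; exact h1

lemma rowGT_le {R : ℕ} {len : Fin R → ℕ} {s t : Fin R} (h : rowGT len s t) :
    len t ≤ len s := by
  rcases h with h | ⟨h, _⟩ <;> omega

lemma cyclic_card {n : ℕ} (A : Finset ℕ) (hA : A ⊆ Finset.range n)
    (h1 : A.Nonempty) (h2 : A ≠ Finset.range n) :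
    A.card + 1 ≤ (A ∪ A.image (fun x => (x + (n-1)) % n)).card := by
  classical
  have hn : 0 < n := by
    obtain ⟨a, ha⟩ := h1
    exact lt_of_le_of_lt (Nat.zero_le a) (Finset.mem_range.mp (hA ha))
  set pred : ℕ → ℕ := fun x => (x + (n-1)) % n with hpred
  have hsucc : ∀ x < n, (pred x + 1) % n = x := by
    intro x hx
    have h3 : (pred x + 1) % n = (x + (n-1) + 1) % n := Nat.mod_add_mod _ _ _
    have h4 : x + (n-1) + 1 = x + n := by omega
    rw [h3, h4, Nat.add_mod_right, Nat.mod_eq_of_lt hx]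
  set B := A.image pred with hB
  have hBcard : B.card = A.card := by
    apply Finset.card_image_of_injOn
    intro a ha b hb hab
    have ha' := Finset.mem_range.mp (hA ha)
    have hb' := Finset.mem_range.mp (hA hb)
    rw [← hsucc a ha', ← hsucc b hb', hab]
  have hex : ∃ x ∈ B, x ∉ A := by
    by_contra hc
    push_neg at hc
    have hBA : B = A := Finset.eq_of_subset_of_card_le hc (by omega)
    have hclos : ∀ a ∈ A, (a + 1) % n ∈ A := by
      intro a ha
      have : a ∈ B := hBA ▸ ha
      obtain ⟨b, hb, hba⟩ := Finset.mem_image.mp this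
      have : (a + 1) % n = b := by
        rw [← hba]; exact hsucc b (Finset.mem_range.mp (hA hb))
      rw [this]; exact hb
    have hiter : ∀ k, ∀ a ∈ A, (a + k) % n ∈ A := by
      intro k
      induction k with
      | zero => intro a ha; simpa [Nat.mod_eq_of_lt (Finset.mem_range.mp (hA ha))] using ha
      | succ k ih =>
        intro a ha
        have h5 : (a + (k+1)) % n = ((a + k) % n + 1) % n := by
          rw [Nat.mod_add_mod]; ring_nf
        rw [h5]
        exact hclos _ (ih a ha)
    have : Finset.range n ⊆ A := by
      intro m hm
      obtain ⟨a, ha⟩ := h1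
      have ha' := Finset.mem_range.mp (hA ha)
      have h6 : a + (n - a + m) = n + m := by omega
      have := hiter (n - a + m) a ha
      rw [h6, Nat.add_mod_left, Nat.mod_eq_of_lt (Finset.mem_range.mp hm)] at this
      exact this
    exact h2 (Finset.Subset.antisymm hA this)
  obtain ⟨x, hxB, hxA⟩ := hex
  have : insert x A ⊆ A ∪ B := by
    intro y hy
    rcases Finset.mem_insert.mp hy with rfl | hy
    · exact Finset.mem_union_right _ hxB
    · exact Finset.mem_union_left _ hy
  calc A.card + 1 = (insert x A).card := (Finset.card_insert_of_notMem hxA).symm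
    _ ≤ (A ∪ B).card := Finset.card_le_card this

def Aset {R : ℕ} (len : Fin R → ℕ) (G : Fin R → ℕ → Fin R) (r s : Fin R) : Finset ℕ :=
  (Finset.range (len s)).filter (fun p => G s p = r)

lemma memAset {R : ℕ} {len : Fin R → ℕ} {G : Fin R → ℕ → Fin R} {r s : Fin R} {p : ℕ} :
    p ∈ Aset len G r s ↔ p < len s ∧ G s p = r := by
  simp [Aset]

theorem mainComb {R : ℕ} (len : Fin R → ℕ) (hlen : ∀ s, 0 < len s) (G : Fin R → ℕ → Fin R)
    (Hfib : ∀ r : Fin R, ∑ s : Fin R, (Aset len G r s).card = len r)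
    (H : ∀ s t, rowGT len s t → ∀ n, n < len t →
      G s n ≠ G t n ∧ G s ((n + 1) % len s) ≠ G t n) :
    ∀ s : Fin R, ∃ r : Fin R, len r = len s ∧
      ∀ t p, p < len t → (G t p = r ↔ t = s) := by
  classical
  set M := Finset.univ.sup len with hM
  have hlM : ∀ s : Fin R, len s ≤ M := fun s => Finset.le_sup (Finset.mem_univ s)
  set key : Fin R → Lex (ℕ × ℕ) := fun s => toLex (M - len s, s.val) with hkey
  have hkey_lt : ∀ s t : Fin R, rowGT len s t → key s < key t := by
    intro s t h
    rw [hkey, Prod.Lex.lt_iff]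
    rcases h with h | ⟨h, h2⟩
    · left; have := hlM s; have := hlM t; simp only [ofLex_toLex]; omega
    · right; exact ⟨by simp only [ofLex_toLex]; omega, h2⟩
  have hkey_rev : ∀ s t : Fin R, s ≠ t → key s ≤ key t → rowGT len s t := by
    intro s t hst hle
    rcases rowGT_total len hst with h | h
    · exact h
    · exact absurd (hkey_lt t s h) (not_lt.mpr hle)
  have hdisj : ∀ (r : Fin R) (s t : Fin R), rowGT len s t →
      Disjoint (Aset len G r s) (Aset len G r t) := by
    intro r s t h
    rw [Finset.disjoint_left]
    intro p hps hpt
    obtain ⟨hp1, hG1⟩ := memAset.mp hps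
    obtain ⟨hp2, hG2⟩ := memAset.mp hpt
    exact (H s t h p hp2).1 (by rw [hG1, hG2])
  have hdisj' : ∀ (r : Fin R) (s t : Fin R), s ≠ t →
      Disjoint (Aset len G r s) (Aset len G r t) := by
    intro r s t hst
    rcases rowGT_total len hst with h | h
    · exact hdisj r s t h
    · exact (hdisj r t s h).symm
  have main : ∀ d ℓ, M < ℓ + d →
      ((∀ r : Fin R, len r = ℓ → ∃ s, len s = ℓ ∧
          ∀ t p, p < len t → (G t p = r ↔ t = s)) ∧
       (∀ s : Fin R, len s = ℓ → ∃ r, len r = ℓ ∧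
          ∀ t p, p < len t → (G t p = r ↔ t = s))) := by
    intro d
    induction d with
    | zero =>
      intro ℓ hℓ
      constructor
      · intro r hr; exact absurd (hlM r) (by omega)
      · intro s hs; exact absurd (hlM s) (by omega)
    | succ d ih =>
      intro ℓ hℓ
      have P1 : ∀ r : Fin R, len r = ℓ → ∃ s, len s = ℓ ∧
          ∀ t p, p < len t → (G t p = r ↔ t = s) := by
        intro r hr
        have hlong : ∀ s : Fin R, ℓ < len s → ∀ p, p < len s → G s p ≠ r := by
          intro s hs p hp hG
          obtain ⟨r', hr', hiff⟩ := (ih (len s) (by omega)).2 s rfl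
          have he : G s p = r' := (hiff s p hp).mpr rfl
          rw [hG] at he
          rw [← he] at hr'
          omega
        have hApos : 0 < ℓ := hr ▸ hlen r
        have hsum : ∑ s, (Aset len G r s).card = ℓ := by rw [Hfib r, hr]
        have hAlen : ∀ s, (Aset len G r s).Nonempty → len s ≤ ℓ := by
          rintro s ⟨p, hp⟩
          obtain ⟨hp1, hp2⟩ := memAset.mp hp
          by_contra hc
          exact hlong s (by omega) p hp1 hp2
        set T := Finset.univ.filter (fun s => (Aset len G r s).Nonempty) with hT
        have hTmem : ∀ s, s ∈ T ↔ (Aset len G r s).Nonempty := by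
          intro s; simp [hT]
        have hToff : ∀ s, s ∉ T → (Aset len G r s).card = 0 := by
          intro s hs
          rw [Finset.card_eq_zero, ← Finset.not_nonempty_iff_eq_empty]
          exact fun h => hs ((hTmem s).mpr h)
        have hTne : T.Nonempty := by
          by_contra hc
          rw [Finset.not_nonempty_iff_eq_empty] at hc
          have : ∑ s, (Aset len G r s).card = 0 := by
            apply Finset.sum_eq_zero
            intro s _
            apply hToff
            rw [hc]
            exact Finset.notMem_empty s
          omega
        obtain ⟨t₁, ht₁T, ht₁min⟩ := Finset.exists_min_image T key hTne
        have hmax : ∀ t ∈ T, t ≠ t₁ → rowGT len t₁ t :=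
          fun t ht hne => hkey_rev t₁ t (Ne.symm hne) (ht₁min t ht)
        have ht₁ne : (Aset len G r t₁).Nonempty := (hTmem t₁).mp ht₁T
        have ht₁len : len t₁ ≤ ℓ := hAlen t₁ ht₁ne
        have hsub1 : (Aset len G r t₁).card ≤ len t₁ := by
          have h := Finset.card_le_card
            (show Aset len G r t₁ ⊆ Finset.range (len t₁) from Finset.filter_subset _ _)
          rwa [Finset.card_range] at h
        by_cases hone : ∀ t ∈ T, t = t₁
        · have hsum1 : ∑ s, (Aset len G r s).card = (Aset len G r t₁).card := by
            apply Finset.sum_eq_single t₁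
            · intro s _ hne
              apply hToff
              intro hsT
              exact hne (hone s hsT)
            · intro h; exact absurd (Finset.mem_univ t₁) h
          have hcard : (Aset len G r t₁).card = ℓ := by rw [← hsum1, hsum]
          have hlt : len t₁ = ℓ := by omega
          have hAeq : Aset len G r t₁ = Finset.range (len t₁) := by
            apply Finset.eq_of_subset_of_card_le
              (show Aset len G r t₁ ⊆ Finset.range (len t₁) from Finset.filter_subset _ _)
            rw [Finset.card_range, hcard]; omega
          refine ⟨t₁, hlt, ?_⟩
          intro t p hp
          constructor
          · intro hG
            have hpA : p ∈ Aset len G r t := memAset.mpr ⟨hp, hG⟩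
            exact hone t ((hTmem t).mpr ⟨p, hpA⟩)
          · rintro rfl
            have : p ∈ Aset len G r t := by rw [hAeq]; exact Finset.mem_range.mpr hp
            exact (memAset.mp this).2
        · push_neg at hone
          obtain ⟨t₂, ht₂T, ht₂ne⟩ := hone
          exfalso
          have hL1pos : 0 < len t₁ := hlen t₁
          by_cases hfull : Aset len G r t₁ = Finset.range (len t₁)
          · obtain ⟨p, hp⟩ := (hTmem t₂).mp ht₂T
            obtain ⟨hp1, hp2⟩ := memAset.mp hp
            have hgt : rowGT len t₁ t₂ := hmax t₂ ht₂T ht₂ne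
            have hple : p < len t₁ := lt_of_lt_of_le hp1 (rowGT_le hgt)
            have hG1 : G t₁ p = r := by
              have : p ∈ Aset len G r t₁ := by rw [hfull]; exact Finset.mem_range.mpr hple
              exact (memAset.mp this).2
            exact (H t₁ t₂ hgt p hp1).1 (by rw [hG1, hp2])
          · set B := (Aset len G r t₁).image (fun x => (x + (len t₁ - 1)) % len t₁) with hBdef
            set Ch := Aset len G r t₁ ∪ B with hChdef
            have hcyc : (Aset len G r t₁).card + 1 ≤ Ch.card :=
              cyclic_card _ (Finset.filter_subset _ _) ht₁ne hfull
            have hChsub : Ch ⊆ Finset.range (len t₁) := by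
              apply Finset.union_subset (Finset.filter_subset _ _)
              intro x hx
              obtain ⟨y, _, hy⟩ := Finset.mem_image.mp hx
              rw [← hy]
              exact Finset.mem_range.mpr (Nat.mod_lt _ hL1pos)
            have hChdisj : ∀ t ∈ T, t ≠ t₁ → Disjoint Ch (Aset len G r t) := by
              intro t ht hne
              have hgt : rowGT len t₁ t := hmax t ht hne
              rw [Finset.disjoint_left]
              intro p hpCh hpA
              obtain ⟨hpl, hGt⟩ := memAset.mp hpA
              obtain ⟨h1, h2⟩ := H t₁ t hgt p hpl
              rcases Finset.mem_union.mp hpCh with hp1 | hp2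
              · exact h1 (by rw [(memAset.mp hp1).2, hGt])
              · obtain ⟨x, hx, hxe⟩ := Finset.mem_image.mp hp2
                have hxlt : x < len t₁ := Finset.mem_range.mp (Finset.filter_subset _ _ hx)
                have hkey2 : (p + 1) % len t₁ = x := by
                  rw [← hxe, Nat.mod_add_mod]
                  have h4 : x + (len t₁ - 1) + 1 = x + len t₁ := by omega
                  rw [h4, Nat.add_mod_right, Nat.mod_eq_of_lt hxlt]
                have hG1 : G t₁ ((p + 1) % len t₁) = r := by
                  rw [hkey2]; exact (memAset.mp hx).2
                exact h2 (by rw [hG1, hGt])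
            set D := Ch ∪ (T.erase t₁).biUnion (Aset len G r) with hDdef
            have hDsub : D ⊆ Finset.range (len t₁) := by
              apply Finset.union_subset hChsub
              apply Finset.biUnion_subset.mpr
              intro t ht
              have hgt : rowGT len t₁ t := hmax t (Finset.mem_of_mem_erase ht) (Finset.ne_of_mem_erase ht)
              exact (Finset.filter_subset _ _).trans (by
                intro x hx
                exact Finset.mem_range.mpr (lt_of_lt_of_le (Finset.mem_range.mp hx) (rowGT_le hgt)))
            have hDcard : D.card = Ch.card + ∑ t ∈ T.erase t₁, (Aset len G r t).card := by
              rw [hDdef, Finset.card_union_of_disjoint, Finset.card_biUnion]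
              · intro x hx y hy hxy
                exact hdisj' r x y hxy
              · rw [Finset.disjoint_biUnion_right]
                intro t ht
                exact hChdisj t (Finset.mem_of_mem_erase ht) (Finset.ne_of_mem_erase ht)
            have hsum2 : ∑ s, (Aset len G r s).card
                = (Aset len G r t₁).card + ∑ t ∈ T.erase t₁, (Aset len G r t).card := by
              rw [← Finset.sum_erase_add Finset.univ _ (Finset.mem_univ t₁), add_comm]
              congr 1
              rw [eq_comm]
              apply Finset.sum_subset
              · exact Finset.erase_subset_erase t₁ (T.subset_univ)
              · intro x hx hxT
                apply hToff
                intro hxT2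
                exact hxT (Finset.mem_erase.mpr ⟨Finset.ne_of_mem_erase hx, hxT2⟩)
            have hDle : D.card ≤ len t₁ := by
              have := Finset.card_le_card hDsub
              rwa [Finset.card_range] at this
            omega
      refine ⟨P1, ?_⟩
      intro s hs
      set S := Finset.univ.filter (fun x : Fin R => len x = ℓ) with hS
      have hSmem : ∀ x, x ∈ S ↔ len x = ℓ := by intro x; simp [hS]
      have hsurj := Finset.surj_on_of_inj_on_of_card_le (s := S) (t := S)
        (fun r hr => Classical.choose (P1 r ((hSmem r).mp hr)))
        (fun r hr => (hSmem _).mpr (Classical.choose_spec (P1 r ((hSmem r).mp hr))).1)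
        (fun r₁ r₂ h₁ h₂ he => by
          obtain ⟨hl₁, hiff₁⟩ := Classical.choose_spec (P1 r₁ ((hSmem r₁).mp h₁))
          obtain ⟨hl₂, hiff₂⟩ := Classical.choose_spec (P1 r₂ ((hSmem r₂).mp h₂))
          have e1 : G (Classical.choose (P1 r₁ ((hSmem r₁).mp h₁))) 0 = r₁ :=
            (hiff₁ _ 0 (hlen _)).mpr rfl
          have e2 : G (Classical.choose (P1 r₂ ((hSmem r₂).mp h₂))) 0 = r₂ :=
            (hiff₂ _ 0 (hlen _)).mpr rfl
          rw [← e1, ← e2]; exact congrArg (fun z => G z 0) he)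
        le_rfl s ((hSmem s).mpr hs)
      obtain ⟨r, hrS, hsr⟩ := hsurj
      obtain ⟨hl, hiff⟩ := Classical.choose_spec (P1 r ((hSmem r).mp hrS))
      refine ⟨r, (hSmem r).mp hrS, ?_⟩
      intro t p hp
      rw [hsr]
      exact hiff t p hp
  intro s
  exact (main (M + 1) (len s) (by omega)).2 s rfl

/-- The prefactor `f(x) = ∏_{(a,i) > (a',i')} ∏_j (x_{(a,i),j} - x_{(a',i'),j})
(x_{(a,i),j+1} - x_{(a',i'),j})` linking each pair of rows in adjacent columns, the
column index `j+1` being cyclic within the longer row.  Variables are indexed by cells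
`⟨s, j⟩` of the diagram with rows `s : Fin R` of length `len s`. -/
noncomputable def rowLinkPoly (R : ℕ) (len : Fin R → ℕ) (hlen : ∀ s, 0 < len s) :
    MvPolynomial (Σ s : Fin R, Fin (len s)) ℚ :=
  ∏ s : Fin R, ∏ t : Fin R,
    if h : rowGT len s t then
      ∏ j : Fin (len t),
        (X ⟨s, ⟨(j : ℕ), by rcases h with h | ⟨h, _⟩ <;> omega⟩⟩ - X ⟨t, j⟩) *
        (X ⟨s, ⟨((j : ℕ) + 1) % len s, Nat.mod_lt _ (hlen s)⟩⟩ - X ⟨t, j⟩)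
    else 1

/-- under the evaluation `x_{(a,i),j} ↦ y_{(a,i)}` (sending each cell to
the variable of its row), a permutation `σ` of the cells makes `f∘σ` evaluate to a
nonzero function exactly when `σ` permutes variables within rows or exchanges entire
rows of equal length, i.e. when `σ` covers a length-preserving permutation `τ` of rows. -/
theorem stmt_17 (R : ℕ) (len : Fin R → ℕ) (hlen : ∀ s, 0 < len s)
    (σ : Equiv.Perm (Σ s : Fin R, Fin (len s))) :
    aeval (fun c : Σ s : Fin R, Fin (len s) => (X c.1 : MvPolynomial (Fin R) ℚ))
        (rename σ (rowLinkPoly R len hlen)) ≠ 0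
    ↔ ∃ τ : Equiv.Perm (Fin R), (∀ s, len (τ s) = len s) ∧
        ∀ c : Σ s : Fin R, Fin (len s), (σ c).1 = τ c.1 := by

  classical
  rw [aeval_rename]
  set g' : (Σ s : Fin R, Fin (len s)) → MvPolynomial (Fin R) ℚ :=
    (fun c : Σ s : Fin R, Fin (len s) => (X c.1 : MvPolynomial (Fin R) ℚ)) ∘ σ with hg'
  have hdite : ∀ (P : Prop) [Decidable P] (a : P → MvPolynomial (Σ s : Fin R, Fin (len s)) ℚ)
      (b : ¬P → MvPolynomial (Σ s : Fin R, Fin (len s)) ℚ),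
      aeval g' (dite P a b) = dite P (fun h => aeval g' (a h)) (fun h => aeval g' (b h)) :=
    fun P _ a b => apply_dite _ _ _ _
  have key : (aeval g' (rowLinkPoly R len hlen) ≠ 0) ↔
      ∀ (s t : Fin R) (h : rowGT len s t) (j : Fin (len t)),
        (σ ⟨s, ⟨(j : ℕ), lt_of_lt_of_le j.isLt (rowGT_le h)⟩⟩).1 ≠ (σ ⟨t, j⟩).1 ∧
        (σ ⟨s, ⟨((j : ℕ) + 1) % len s, Nat.mod_lt _ (hlen s)⟩⟩).1 ≠ (σ ⟨t, j⟩).1 := by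
    rw [rowLinkPoly, map_prod]
    simp only [map_prod, hdite, map_mul, map_sub, aeval_X, map_one]
    rw [Finset.prod_ne_zero_iff]
    constructor
    · intro hne s t h j
      have h1 := hne s (Finset.mem_univ s)
      rw [Finset.prod_ne_zero_iff] at h1
      have h2 := h1 t (Finset.mem_univ t)
      rw [dif_pos h, Finset.prod_ne_zero_iff] at h2
      have h3 := h2 j (Finset.mem_univ j)
      rw [mul_ne_zero_iff, sub_ne_zero, sub_ne_zero] at h3
      exact ⟨fun e => h3.1 (by simp only [hg', Function.comp_apply]; rw [e]),
             fun e => h3.2 (by simp only [hg', Function.comp_apply]; rw [e])⟩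
    · intro hC s _
      rw [Finset.prod_ne_zero_iff]
      intro t _
      split_ifs with h
      · rw [Finset.prod_ne_zero_iff]
        intro j _
        apply mul_ne_zero <;> rw [sub_ne_zero] <;> intro e
        · exact (hC s t h j).1 (MvPolynomial.X_injective e)
        · exact (hC s t h j).2 (MvPolynomial.X_injective e)
      · exact one_ne_zero
  rw [key]
  constructor
  · intro hC
    set G : Fin R → ℕ → Fin R :=
      fun s n => (σ ⟨s, ⟨n % len s, Nat.mod_lt _ (hlen s)⟩⟩).1 with hG
    have hGlt : ∀ (s : Fin R) (n : ℕ) (hn : n < len s), G s n = (σ ⟨s, ⟨n, hn⟩⟩).1 := by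
      intro s n hn
      exact congrArg (fun j : Fin (len s) => (σ ⟨s, j⟩).1) (Fin.ext (Nat.mod_eq_of_lt hn))
    have H : ∀ s t, rowGT len s t → ∀ n, n < len t →
        G s n ≠ G t n ∧ G s ((n + 1) % len s) ≠ G t n := by
      intro s t h n hn
      have hns : n < len s := lt_of_lt_of_le hn (rowGT_le h)
      obtain ⟨c1, c2⟩ := hC s t h ⟨n, hn⟩
      constructor
      · rw [hGlt s n hns, hGlt t n hn]
        exact c1
      · rw [hGlt t n hn]
        have : G s ((n + 1) % len s)
            = (σ ⟨s, ⟨(n + 1) % len s, Nat.mod_lt _ (hlen s)⟩⟩).1 :=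
          hGlt s _ (Nat.mod_lt _ (hlen s))
        rw [this]
        exact c2
    have Hfib : ∀ r : Fin R, ∑ s : Fin R, (Aset len G r s).card = len r := by
      intro r
      have stepa : ∀ s : Fin R, (Aset len G r s).card
          = (Finset.univ.filter fun j : Fin (len s) => (σ ⟨s, j⟩).1 = r).card := by
        intro s
        apply Finset.card_bij (fun p hp => (⟨p, (memAset.mp hp).1⟩ : Fin (len s)))
        · intro p hp
          obtain ⟨h1, h2⟩ := memAset.mp hp
          rw [Finset.mem_filter]
          refine ⟨Finset.mem_univ _, ?_⟩
          rw [← hGlt s p h1]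
          exact h2
        · intro p hp q hq he
          exact congrArg Fin.val he
        · intro j hj
          refine ⟨(j : ℕ), memAset.mpr ⟨j.isLt, ?_⟩, Fin.ext rfl⟩
          rw [hGlt s j j.isLt]
          have := (Finset.mem_filter.mp hj).2
          simpa using this
      have stepb : (Finset.univ.filter fun c : Σ s : Fin R, Fin (len s) => (σ c).1 = r)
          = Finset.univ.sigma fun s : Fin R =>
              (Finset.univ.filter fun j : Fin (len s) => (σ ⟨s, j⟩).1 = r) := by
        ext ⟨s, j⟩
        simp [Finset.mem_sigma]
      have stepc : (Finset.univ.filter fun c : Σ s : Fin R, Fin (len s) => (σ c).1 = r).card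
          = (Finset.univ.filter fun c : Σ s : Fin R, Fin (len s) => c.1 = r).card := by
        apply Finset.card_bij (fun c _ => σ c)
        · intro c hc
          rw [Finset.mem_filter]
          exact ⟨Finset.mem_univ _, (Finset.mem_filter.mp hc).2⟩
        · intro c _ c' _ he
          exact σ.injective he
        · intro c hc
          refine ⟨σ.symm c, ?_, (σ.apply_symm_apply c)⟩
          rw [Finset.mem_filter]
          refine ⟨Finset.mem_univ _, ?_⟩
          rw [σ.apply_symm_apply]
          exact (Finset.mem_filter.mp hc).2
      have stepd : (Finset.univ.filter fun c : Σ s : Fin R, Fin (len s) => c.1 = r).card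
          = len r := by
        have hd : (Finset.univ.filter fun c : Σ s : Fin R, Fin (len s) => c.1 = r)
            = Finset.univ.sigma fun s : Fin R =>
                (Finset.univ.filter fun _ : Fin (len s) => s = r) := by
          ext ⟨s, j⟩
          by_cases hsr : s = r <;> simp [Finset.mem_sigma, hsr]
        rw [hd, Finset.card_sigma]
        have : ∀ s : Fin R, (Finset.univ.filter fun _ : Fin (len s) => s = r).card
            = if s = r then len s else 0 := by
          intro s
          split_ifs with hsr
          · rw [Finset.filter_true_of_mem fun _ _ => hsr, Finset.card_univ, Fintype.card_fin]
          · rw [Finset.filter_false_of_mem fun _ _ => hsr, Finset.card_empty]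
        simp only [this]
        rw [Finset.sum_ite_eq' Finset.univ r len]
        simp
      calc ∑ s : Fin R, (Aset len G r s).card
          = ∑ s : Fin R,
            (Finset.univ.filter fun j : Fin (len s) => (σ ⟨s, j⟩).1 = r).card := by
            exact Finset.sum_congr rfl fun s _ => stepa s
        _ = (Finset.univ.filter fun c : Σ s : Fin R, Fin (len s) => (σ c).1 = r).card := by
            rw [stepb, Finset.card_sigma]
        _ = len r := by rw [stepc, stepd]
    have MC := mainComb len hlen G Hfib H
    set v : Fin R → Fin R := fun s => Classical.choose (MC s) with hv
    have hspec : ∀ s : Fin R, len (v s) = len s ∧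
        ∀ t p, p < len t → (G t p = v s ↔ t = s) :=
      fun s => Classical.choose_spec (MC s)
    have hinj : Function.Injective v := by
      intro s₁ s₂ he
      have e1 : G s₁ 0 = v s₁ := ((hspec s₁).2 s₁ 0 (hlen s₁)).mpr rfl
      rw [he] at e1
      exact ((hspec s₂).2 s₁ 0 (hlen s₁)).mp e1
    refine ⟨Equiv.ofBijective v (Finite.injective_iff_bijective.mp hinj), ?_, ?_⟩
    · intro s
      exact (hspec s).1
    · rintro ⟨s, j⟩
      show (σ ⟨s, j⟩).1 = v s
      rw [← hGlt s j j.isLt]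
      exact ((hspec s).2 s (j : ℕ) j.isLt).mpr rfl
  · rintro ⟨τ, hτl, hτc⟩ s t h j
    have hne : s ≠ t := fun e => rowGT_irrefl len t (e ▸ h)
    have hτ : τ s ≠ τ t := fun e => hne (τ.injective e)
    refine ⟨?_, ?_⟩
    · rw [hτc ⟨s, _⟩, hτc ⟨t, j⟩]
      exact hτ
    · rw [hτc ⟨s, _⟩, hτc ⟨t, j⟩]
      exact hτ
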